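/- For d = 3 and the Norrell state |N⟩ = (−|0⟩ + 2|1⟩ − |2⟩)/√6 in ℂ³, the min-thauma SDP has optimal value sup{ ⟨N|σ|N⟩ : σ positive semidefinite on ℂ³, ‖σ‖_{W,1} ≤ 1 } = 2/3; that is, θ_min(N) = log₂(3/2). -/

import Mathlib

open Matrix Complex BigOperators
open scoped ComplexOrder

noncomputable section

namespace Magic

/-- ω = exp(2πi/d) -/
def omegaC (d : ℕ) : ℂ := Complex.exp (2 * Real.pi * Complex.I / d)

/-- τ = exp((d+1)πi/d) -/
def tauC (d : ℕ) : ℂ := Complex.exp ((d + 1) * Real.pi * Complex.I / d)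

/-- Shift operator X|j⟩ = |j⊕1⟩. -/
def shiftX (d : ℕ) [NeZero d] : Matrix (ZMod d) (ZMod d) ℂ :=
  Matrix.of fun r c => if r = c + 1 then 1 else 0

/-- Boost operator Z|j⟩ = ω^j |j⟩. -/
def boostZ (d : ℕ) [NeZero d] : Matrix (ZMod d) (ZMod d) ℂ :=
  Matrix.diagonal fun j => omegaC d ^ j.val

/-- Heisenberg–Weyl operator T_u = τ^{-a₁a₂} Z^{a₁} X^{a₂}. -/
def HW (d : ℕ) [NeZero d] (u : ZMod d × ZMod d) : Matrix (ZMod d) (ZMod d) ℂ :=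
  tauC d ^ (-((u.1.val * u.2.val : ℕ) : ℤ)) • (boostZ d ^ u.1.val * shiftX d ^ u.2.val)

/-- A₀ = (1/d) ∑_u T_u. -/
def A0 (d : ℕ) [NeZero d] : Matrix (ZMod d) (ZMod d) ℂ :=
  (d : ℂ)⁻¹ • ∑ u : ZMod d × ZMod d, HW d u

/-- Phase-space point operators A_u = T_u A₀ T_u†. -/
def Apt (d : ℕ) [NeZero d] (u : ZMod d × ZMod d) : Matrix (ZMod d) (ZMod d) ℂ :=
  HW d u * A0 d * (HW d u)ᴴ

/-- Discrete Wigner function W_V(u) = tr(A_u V)/d. -/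
def wig (d : ℕ) [NeZero d] (V : Matrix (ZMod d) (ZMod d) ℂ) (u : ZMod d × ZMod d) : ℂ :=
  (Apt d u * V).trace / d

/-- Wigner trace norm ‖V‖_{W,1} = ∑_u |W_V(u)|. -/
def wnorm1 (d : ℕ) [NeZero d] (V : Matrix (ZMod d) (ZMod d) ℂ) : ℝ :=
  ∑ u : ZMod d × ZMod d, ‖wig d V u‖

/-- Wigner spectral norm ‖V‖_{W,∞} = d · max_u |W_V(u)|. -/
def wnormInf (d : ℕ) [NeZero d] (V : Matrix (ZMod d) (ZMod d) ℂ) : ℝ :=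
  (d : ℝ) * ⨆ u : ZMod d × ZMod d, ‖wig d V u‖

end Magic

namespace Magic

/-- The Strange state |S⟩ = (|1⟩ - |2⟩)/√2. -/
def strange : ZMod 3 → ℂ :=
  fun j => if j = 1 then ((Real.sqrt 2)⁻¹ : ℝ)
    else if j = 2 then (-(Real.sqrt 2)⁻¹ : ℝ) else 0

/-- The Norrell state |N⟩ = (-|0⟩ + 2|1⟩ - |2⟩)/√6. -/
def norrell : ZMod 3 → ℂ :=
  fun j => if j = 1 then ((2 / Real.sqrt 6 : ℝ) : ℂ) else ((-(Real.sqrt 6)⁻¹ : ℝ) : ℂ)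

/-- The H₊ state |H₊⟩ = ((1+√3)|0⟩ + |1⟩ + |2⟩)/√(2(3+√3)). -/
def hplus : ZMod 3 → ℂ :=
  fun j => if j = 0 then (((1 + Real.sqrt 3) / Real.sqrt (2 * (3 + Real.sqrt 3)) : ℝ) : ℂ)
    else (((Real.sqrt (2 * (3 + Real.sqrt 3)))⁻¹ : ℝ) : ℂ)

/-- ξ = exp(2πi/9). -/
def xi : ℂ := Complex.exp (2 * Real.pi * Complex.I / 9)

/-- The T state |T⟩ = (ξ|0⟩ + |1⟩ + ξ⁻¹|2⟩)/√3. -/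
def tket : ZMod 3 → ℂ :=
  fun j => (if j = 0 then xi else if j = 1 then 1 else xi⁻¹) / ((Real.sqrt 3 : ℝ) : ℂ)

/-- The rank-one projector |ψ⟩⟨ψ|. -/
def projOf (ψ : ZMod 3 → ℂ) : Matrix (ZMod 3) (ZMod 3) ℂ :=
  Matrix.vecMulVec ψ (star ψ)

end Magic

namespace Magic

lemma zmod3_cases (i : ZMod 3) : i = 0 ∨ i = 1 ∨ i = 2 := by revert i; decide

lemma zval0 : (0:ZMod 3).val = 0 := rfl
lemma zval1 : (1:ZMod 3).val = 1 := rfl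
lemma zval2 : (2:ZMod 3).val = 2 := rfl

lemma zval3 : (3:ZMod 3).val = 0 := by decide
lemma zval4 : (4:ZMod 3).val = 1 := by decide

lemma zadd00 : ((0:ZMod 3) + 0) = 0 := by decide
lemma zadd01 : ((0:ZMod 3) + 1) = 1 := by decide
lemma zadd02 : ((0:ZMod 3) + 2) = 2 := by decide
lemma zadd10 : ((1:ZMod 3) + 0) = 1 := by decide
lemma zadd11 : ((1:ZMod 3) + 1) = 2 := by decide
lemma zadd12 : ((1:ZMod 3) + 2) = 0 := by decide
lemma zadd20 : ((2:ZMod 3) + 0) = 2 := by decide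
lemma zadd21 : ((2:ZMod 3) + 1) = 0 := by decide
lemma zadd22 : ((2:ZMod 3) + 2) = 1 := by decide

lemma sum3 {M : Type*} [AddCommMonoid M] (f : ZMod 3 → M) : ∑ x, f x = f 0 + f 1 + f 2 := by
  have : (Finset.univ : Finset (ZMod 3)) = {0,1,2} := by decide
  rw [this, Finset.sum_insert (by decide), Finset.sum_insert (by decide), Finset.sum_singleton,
    add_assoc]

lemma omega_prim : IsPrimitiveRoot (omegaC 3) 3 := by
  have h := Complex.isPrimitiveRoot_exp 3 (by norm_num)
  simpa [omegaC] using h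

lemma h3 : omegaC 3 ^ 3 = 1 := omega_prim.pow_eq_one

lemma hne0 : omegaC 3 ≠ 0 := by
  intro h; have := h3; rw [h] at this; simp at this

lemma hs : omegaC 3 ^ 2 + omegaC 3 + 1 = 0 := by
  have hne1 : omegaC 3 ≠ 1 := omega_prim.ne_one (by norm_num)
  have h : (omegaC 3 - 1) * (omegaC 3 ^ 2 + omegaC 3 + 1) = 0 := by linear_combination h3
  rcases mul_eq_zero.mp h with h | h
  · exact absurd (sub_eq_zero.mp h) hne1
  · exact h

lemma hp3 : omegaC 3 ^ 3 = 1 := h3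
lemma hp4 : omegaC 3 ^ 4 = omegaC 3 := by linear_combination omegaC 3 * h3
lemma hp5 : omegaC 3 ^ 5 = omegaC 3 ^ 2 := by linear_combination (omegaC 3)^2 * h3
lemma hp6 : omegaC 3 ^ 6 = 1 := by linear_combination ((omegaC 3)^3 + 1) * h3
lemma hp7 : omegaC 3 ^ 7 = omegaC 3 := by linear_combination ((omegaC 3)^4 + omegaC 3) * h3
lemma hp8 : omegaC 3 ^ 8 = omegaC 3 ^ 2 := by
  linear_combination ((omegaC 3)^5 + (omegaC 3)^2) * h3

lemma hconj : (starRingEnd ℂ) (omegaC 3) = omegaC 3 ^ 2 := by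
  have h1 : omegaC 3 * (starRingEnd ℂ) (omegaC 3) = 1 := by
    rw [omegaC, ← Complex.exp_conj, ← Complex.exp_add]
    have h : (2 * ↑Real.pi * Complex.I / ((3:ℕ):ℂ)) +
        (starRingEnd ℂ) (2 * ↑Real.pi * Complex.I / ((3:ℕ):ℂ)) = 0 := by
      simp [map_div₀, _root_.map_mul, _root_.map_ofNat, Complex.conj_I, Complex.conj_ofReal,
        Complex.conj_natCast]
      ring
    rw [h, Complex.exp_zero]
  have h2 : omegaC 3 * omegaC 3 ^ 2 = 1 := by linear_combination h3
  exact mul_left_cancel₀ hne0 (h1.trans h2.symm)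

lemma htau : tauC 3 = omegaC 3 ^ 2 := by
  rw [tauC, omegaC, ← Complex.exp_nat_mul]
  congr 1
  push_cast
  ring

lemma ht (n : ℕ) : tauC 3 ^ (-(n:ℤ)) = omegaC 3 ^ (n % 3) := by
  rw [htau]
  have h1 : (omegaC 3 ^ 2 : ℂ) ^ (-(n:ℤ)) = ((omegaC 3 ^ (2*n) : ℂ))⁻¹ := by
    rw [_root_.zpow_neg, zpow_natCast, ← pow_mul]
  have key : omegaC 3 ^ (2*n) * omegaC 3 ^ (n % 3) = 1 := by
    rw [← pow_add]
    exact (omega_prim.pow_eq_one_iff_dvd _).mpr (by omega)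
  rw [h1, inv_eq_of_mul_eq_one_right key]
lemma HW_00 : HW 3 (0,0) = Matrix.of (fun i j : ZMod 3 => if i = 0 then (if j = 0 then (1:ℂ) else if j = 1 then (0:ℂ) else (0:ℂ)) else if i = 1 then (if j = 0 then (0:ℂ) else if j = 1 then (1:ℂ) else (0:ℂ)) else (if j = 0 then (0:ℂ) else if j = 1 then (0:ℂ) else (1:ℂ))) := by
  show tauC 3 ^ (-(((0:ZMod 3).val * ((0:ZMod 3)).val : ℕ) : ℤ)) • (boostZ 3 ^ (0:ZMod 3).val * shiftX 3 ^ (0:ZMod 3).val) = _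
  rw [show (((0:ZMod 3).val * ((0:ZMod 3)).val : ℕ)) = 0 from rfl, ht]
  simp only [zval0, zval1, zval2]
  norm_num
  ext i j
  rcases zmod3_cases i with rfl|rfl|rfl <;> rcases zmod3_cases j with rfl|rfl|rfl <;>
    simp (config := { decide := true }) [boostZ, shiftX, Matrix.mul_apply, Matrix.diagonal,
      pow_succ, Matrix.smul_apply, zval1, zval2, zval0, zval3, zval4, zadd00, zadd01, zadd02, zadd10, zadd11, zadd12, zadd20, zadd21, zadd22, -mul_eq_mul_left_iff, -mul_eq_mul_right_iff] <;>
    (try simp [hp3, hp4, hp5, hp6, hp7, hp8, zval0, zval1, zval2, zval3, zval4, zadd00, zadd01, zadd02, zadd10, zadd11, zadd12, zadd20, zadd21, zadd22, pow_succ]) <;>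
    (try ring_nf) <;> (try simp [hp3, hp4, hp5, hp6, hp7, hp8]) <;> (try norm_num) <;>
    (try linear_combination hs)

lemma HW_01 : HW 3 (0,1) = Matrix.of (fun i j : ZMod 3 => if i = 0 then (if j = 0 then (0:ℂ) else if j = 1 then (0:ℂ) else (1:ℂ)) else if i = 1 then (if j = 0 then (1:ℂ) else if j = 1 then (0:ℂ) else (0:ℂ)) else (if j = 0 then (0:ℂ) else if j = 1 then (1:ℂ) else (0:ℂ))) := by
  show tauC 3 ^ (-(((0:ZMod 3).val * ((1:ZMod 3)).val : ℕ) : ℤ)) • (boostZ 3 ^ (0:ZMod 3).val * shiftX 3 ^ (1:ZMod 3).val) = _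
  rw [show (((0:ZMod 3).val * ((1:ZMod 3)).val : ℕ)) = 0 from rfl, ht]
  simp only [zval0, zval1, zval2]
  norm_num
  ext i j
  rcases zmod3_cases i with rfl|rfl|rfl <;> rcases zmod3_cases j with rfl|rfl|rfl <;>
    simp (config := { decide := true }) [boostZ, shiftX, Matrix.mul_apply, Matrix.diagonal,
      pow_succ, Matrix.smul_apply, zval1, zval2, zval0, zval3, zval4, zadd00, zadd01, zadd02, zadd10, zadd11, zadd12, zadd20, zadd21, zadd22, -mul_eq_mul_left_iff, -mul_eq_mul_right_iff] <;>
    (try simp [hp3, hp4, hp5, hp6, hp7, hp8, zval0, zval1, zval2, zval3, zval4, zadd00, zadd01, zadd02, zadd10, zadd11, zadd12, zadd20, zadd21, zadd22, pow_succ]) <;>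
    (try ring_nf) <;> (try simp [hp3, hp4, hp5, hp6, hp7, hp8]) <;> (try norm_num) <;>
    (try linear_combination hs)

lemma HW_02 : HW 3 (0,2) = Matrix.of (fun i j : ZMod 3 => if i = 0 then (if j = 0 then (0:ℂ) else if j = 1 then (1:ℂ) else (0:ℂ)) else if i = 1 then (if j = 0 then (0:ℂ) else if j = 1 then (0:ℂ) else (1:ℂ)) else (if j = 0 then (1:ℂ) else if j = 1 then (0:ℂ) else (0:ℂ))) := by
  show tauC 3 ^ (-(((0:ZMod 3).val * ((2:ZMod 3)).val : ℕ) : ℤ)) • (boostZ 3 ^ (0:ZMod 3).val * shiftX 3 ^ (2:ZMod 3).val) = _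
  rw [show (((0:ZMod 3).val * ((2:ZMod 3)).val : ℕ)) = 0 from rfl, ht]
  simp only [zval0, zval1, zval2]
  norm_num
  ext i j
  rcases zmod3_cases i with rfl|rfl|rfl <;> rcases zmod3_cases j with rfl|rfl|rfl <;>
    simp (config := { decide := true }) [boostZ, shiftX, Matrix.mul_apply, Matrix.diagonal,
      pow_succ, Matrix.smul_apply, zval1, zval2, zval0, zval3, zval4, zadd00, zadd01, zadd02, zadd10, zadd11, zadd12, zadd20, zadd21, zadd22, -mul_eq_mul_left_iff, -mul_eq_mul_right_iff] <;>
    (try simp [hp3, hp4, hp5, hp6, hp7, hp8, zval0, zval1, zval2, zval3, zval4, zadd00, zadd01, zadd02, zadd10, zadd11, zadd12, zadd20, zadd21, zadd22, pow_succ]) <;>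
    (try ring_nf) <;> (try simp [hp3, hp4, hp5, hp6, hp7, hp8]) <;> (try norm_num) <;>
    (try linear_combination hs)

lemma HW_10 : HW 3 (1,0) = Matrix.of (fun i j : ZMod 3 => if i = 0 then (if j = 0 then (1:ℂ) else if j = 1 then (0:ℂ) else (0:ℂ)) else if i = 1 then (if j = 0 then (0:ℂ) else if j = 1 then omegaC 3 else (0:ℂ)) else (if j = 0 then (0:ℂ) else if j = 1 then (0:ℂ) else omegaC 3 ^ 2)) := by
  show tauC 3 ^ (-(((1:ZMod 3).val * ((0:ZMod 3)).val : ℕ) : ℤ)) • (boostZ 3 ^ (1:ZMod 3).val * shiftX 3 ^ (0:ZMod 3).val) = _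
  rw [show (((1:ZMod 3).val * ((0:ZMod 3)).val : ℕ)) = 0 from rfl, ht]
  simp only [zval0, zval1, zval2]
  norm_num
  ext i j
  rcases zmod3_cases i with rfl|rfl|rfl <;> rcases zmod3_cases j with rfl|rfl|rfl <;>
    simp (config := { decide := true }) [boostZ, shiftX, Matrix.mul_apply, Matrix.diagonal,
      pow_succ, Matrix.smul_apply, zval1, zval2, zval0, zval3, zval4, zadd00, zadd01, zadd02, zadd10, zadd11, zadd12, zadd20, zadd21, zadd22, -mul_eq_mul_left_iff, -mul_eq_mul_right_iff] <;>
    (try simp [hp3, hp4, hp5, hp6, hp7, hp8, zval0, zval1, zval2, zval3, zval4, zadd00, zadd01, zadd02, zadd10, zadd11, zadd12, zadd20, zadd21, zadd22, pow_succ]) <;>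
    (try ring_nf) <;> (try simp [hp3, hp4, hp5, hp6, hp7, hp8]) <;> (try norm_num) <;>
    (try linear_combination hs)

lemma HW_11 : HW 3 (1,1) = Matrix.of (fun i j : ZMod 3 => if i = 0 then (if j = 0 then (0:ℂ) else if j = 1 then (0:ℂ) else omegaC 3) else if i = 1 then (if j = 0 then omegaC 3 ^ 2 else if j = 1 then (0:ℂ) else (0:ℂ)) else (if j = 0 then (0:ℂ) else if j = 1 then (1:ℂ) else (0:ℂ))) := by
  show tauC 3 ^ (-(((1:ZMod 3).val * ((1:ZMod 3)).val : ℕ) : ℤ)) • (boostZ 3 ^ (1:ZMod 3).val * shiftX 3 ^ (1:ZMod 3).val) = _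
  rw [show (((1:ZMod 3).val * ((1:ZMod 3)).val : ℕ)) = 1 from rfl, ht]
  simp only [zval0, zval1, zval2]
  norm_num
  ext i j
  rcases zmod3_cases i with rfl|rfl|rfl <;> rcases zmod3_cases j with rfl|rfl|rfl <;>
    simp (config := { decide := true }) [boostZ, shiftX, Matrix.mul_apply, Matrix.diagonal,
      pow_succ, Matrix.smul_apply, zval1, zval2, zval0, zval3, zval4, zadd00, zadd01, zadd02, zadd10, zadd11, zadd12, zadd20, zadd21, zadd22, -mul_eq_mul_left_iff, -mul_eq_mul_right_iff] <;>
    (try simp [hp3, hp4, hp5, hp6, hp7, hp8, zval0, zval1, zval2, zval3, zval4, zadd00, zadd01, zadd02, zadd10, zadd11, zadd12, zadd20, zadd21, zadd22, pow_succ]) <;>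
    (try ring_nf) <;> (try simp [hp3, hp4, hp5, hp6, hp7, hp8]) <;> (try norm_num) <;>
    (try linear_combination hs)

lemma HW_12 : HW 3 (1,2) = Matrix.of (fun i j : ZMod 3 => if i = 0 then (if j = 0 then (0:ℂ) else if j = 1 then omegaC 3 ^ 2 else (0:ℂ)) else if i = 1 then (if j = 0 then (0:ℂ) else if j = 1 then (0:ℂ) else (1:ℂ)) else (if j = 0 then omegaC 3 else if j = 1 then (0:ℂ) else (0:ℂ))) := by
  show tauC 3 ^ (-(((1:ZMod 3).val * ((2:ZMod 3)).val : ℕ) : ℤ)) • (boostZ 3 ^ (1:ZMod 3).val * shiftX 3 ^ (2:ZMod 3).val) = _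
  rw [show (((1:ZMod 3).val * ((2:ZMod 3)).val : ℕ)) = 2 from rfl, ht]
  simp only [zval0, zval1, zval2]
  norm_num
  ext i j
  rcases zmod3_cases i with rfl|rfl|rfl <;> rcases zmod3_cases j with rfl|rfl|rfl <;>
    simp (config := { decide := true }) [boostZ, shiftX, Matrix.mul_apply, Matrix.diagonal,
      pow_succ, Matrix.smul_apply, zval1, zval2, zval0, zval3, zval4, zadd00, zadd01, zadd02, zadd10, zadd11, zadd12, zadd20, zadd21, zadd22, -mul_eq_mul_left_iff, -mul_eq_mul_right_iff] <;>
    (try simp [hp3, hp4, hp5, hp6, hp7, hp8, zval0, zval1, zval2, zval3, zval4, zadd00, zadd01, zadd02, zadd10, zadd11, zadd12, zadd20, zadd21, zadd22, pow_succ]) <;>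
    (try ring_nf) <;> (try simp [hp3, hp4, hp5, hp6, hp7, hp8]) <;> (try norm_num) <;>
    (try linear_combination hs)

lemma HW_20 : HW 3 (2,0) = Matrix.of (fun i j : ZMod 3 => if i = 0 then (if j = 0 then (1:ℂ) else if j = 1 then (0:ℂ) else (0:ℂ)) else if i = 1 then (if j = 0 then (0:ℂ) else if j = 1 then omegaC 3 ^ 2 else (0:ℂ)) else (if j = 0 then (0:ℂ) else if j = 1 then (0:ℂ) else omegaC 3)) := by
  show tauC 3 ^ (-(((2:ZMod 3).val * ((0:ZMod 3)).val : ℕ) : ℤ)) • (boostZ 3 ^ (2:ZMod 3).val * shiftX 3 ^ (0:ZMod 3).val) = _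
  rw [show (((2:ZMod 3).val * ((0:ZMod 3)).val : ℕ)) = 0 from rfl, ht]
  simp only [zval0, zval1, zval2]
  norm_num
  ext i j
  rcases zmod3_cases i with rfl|rfl|rfl <;> rcases zmod3_cases j with rfl|rfl|rfl <;>
    simp (config := { decide := true }) [boostZ, shiftX, Matrix.mul_apply, Matrix.diagonal,
      pow_succ, Matrix.smul_apply, zval1, zval2, zval0, zval3, zval4, zadd00, zadd01, zadd02, zadd10, zadd11, zadd12, zadd20, zadd21, zadd22, -mul_eq_mul_left_iff, -mul_eq_mul_right_iff] <;>
    (try simp [hp3, hp4, hp5, hp6, hp7, hp8, zval0, zval1, zval2, zval3, zval4, zadd00, zadd01, zadd02, zadd10, zadd11, zadd12, zadd20, zadd21, zadd22, pow_succ]) <;>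
    (try ring_nf) <;> (try simp [hp3, hp4, hp5, hp6, hp7, hp8]) <;> (try norm_num) <;>
    (try linear_combination hs)

lemma HW_21 : HW 3 (2,1) = Matrix.of (fun i j : ZMod 3 => if i = 0 then (if j = 0 then (0:ℂ) else if j = 1 then (0:ℂ) else omegaC 3 ^ 2) else if i = 1 then (if j = 0 then omegaC 3 else if j = 1 then (0:ℂ) else (0:ℂ)) else (if j = 0 then (0:ℂ) else if j = 1 then (1:ℂ) else (0:ℂ))) := by
  show tauC 3 ^ (-(((2:ZMod 3).val * ((1:ZMod 3)).val : ℕ) : ℤ)) • (boostZ 3 ^ (2:ZMod 3).val * shiftX 3 ^ (1:ZMod 3).val) = _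
  rw [show (((2:ZMod 3).val * ((1:ZMod 3)).val : ℕ)) = 2 from rfl, ht]
  simp only [zval0, zval1, zval2]
  norm_num
  ext i j
  rcases zmod3_cases i with rfl|rfl|rfl <;> rcases zmod3_cases j with rfl|rfl|rfl <;>
    simp (config := { decide := true }) [boostZ, shiftX, Matrix.mul_apply, Matrix.diagonal,
      pow_succ, Matrix.smul_apply, zval1, zval2, zval0, zval3, zval4, zadd00, zadd01, zadd02, zadd10, zadd11, zadd12, zadd20, zadd21, zadd22, -mul_eq_mul_left_iff, -mul_eq_mul_right_iff] <;>
    (try simp [hp3, hp4, hp5, hp6, hp7, hp8, zval0, zval1, zval2, zval3, zval4, zadd00, zadd01, zadd02, zadd10, zadd11, zadd12, zadd20, zadd21, zadd22, pow_succ]) <;>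
    (try ring_nf) <;> (try simp [hp3, hp4, hp5, hp6, hp7, hp8]) <;> (try norm_num) <;>
    (try linear_combination hs)

lemma HW_22 : HW 3 (2,2) = Matrix.of (fun i j : ZMod 3 => if i = 0 then (if j = 0 then (0:ℂ) else if j = 1 then omegaC 3 else (0:ℂ)) else if i = 1 then (if j = 0 then (0:ℂ) else if j = 1 then (0:ℂ) else (1:ℂ)) else (if j = 0 then omegaC 3 ^ 2 else if j = 1 then (0:ℂ) else (0:ℂ))) := by
  show tauC 3 ^ (-(((2:ZMod 3).val * ((2:ZMod 3)).val : ℕ) : ℤ)) • (boostZ 3 ^ (2:ZMod 3).val * shiftX 3 ^ (2:ZMod 3).val) = _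
  rw [show (((2:ZMod 3).val * ((2:ZMod 3)).val : ℕ)) = 4 from rfl, ht]
  simp only [zval0, zval1, zval2]
  norm_num
  ext i j
  rcases zmod3_cases i with rfl|rfl|rfl <;> rcases zmod3_cases j with rfl|rfl|rfl <;>
    simp (config := { decide := true }) [boostZ, shiftX, Matrix.mul_apply, Matrix.diagonal,
      pow_succ, Matrix.smul_apply, zval1, zval2, zval0, zval3, zval4, zadd00, zadd01, zadd02, zadd10, zadd11, zadd12, zadd20, zadd21, zadd22, -mul_eq_mul_left_iff, -mul_eq_mul_right_iff] <;>
    (try simp [hp3, hp4, hp5, hp6, hp7, hp8, zval0, zval1, zval2, zval3, zval4, zadd00, zadd01, zadd02, zadd10, zadd11, zadd12, zadd20, zadd21, zadd22, pow_succ]) <;>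
    (try ring_nf) <;> (try simp [hp3, hp4, hp5, hp6, hp7, hp8]) <;> (try norm_num) <;>
    (try linear_combination hs)


lemma A0_eq : A0 3 = Matrix.of (fun i j : ZMod 3 => if i + j = 0 then (1:ℂ) else 0) := by
  show (3:ℂ)⁻¹ • ∑ u : ZMod 3 × ZMod 3, HW 3 u = _
  rw [Fintype.sum_prod_type, sum3]
  simp only [sum3, HW_00, HW_01, HW_02, HW_10, HW_11, HW_12, HW_20, HW_21, HW_22]
  ext i j
  rcases zmod3_cases i with rfl|rfl|rfl <;> rcases zmod3_cases j with rfl|rfl|rfl <;>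
    simp (config := { decide := true }) [Matrix.smul_apply, Matrix.add_apply] <;>
    (try norm_num) <;> (try linear_combination hs)
lemma Apt_00 : Apt 3 (0,0) = Matrix.of (fun i j : ZMod 3 => if i = 0 then (if j = 0 then (1:ℂ) else if j = 1 then (0:ℂ) else (0:ℂ)) else if i = 1 then (if j = 0 then (0:ℂ) else if j = 1 then (0:ℂ) else (1:ℂ)) else (if j = 0 then (0:ℂ) else if j = 1 then (1:ℂ) else (0:ℂ))) := by
  show HW 3 (0,0) * A0 3 * (HW 3 (0,0))ᴴ = _
  rw [HW_00, A0_eq]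
  ext i j
  rcases zmod3_cases i with rfl|rfl|rfl <;> rcases zmod3_cases j with rfl|rfl|rfl <;>
    simp (config := { decide := true }) [Matrix.mul_apply, Matrix.conjTranspose_apply, sum3,
      Complex.star_def, map_pow, hconj, apply_ite (starRingEnd ℂ), map_zero, _root_.map_one, zval0, zval1, zval2, zval3, zval4, zadd00, zadd01, zadd02, zadd10, zadd11, zadd12, zadd20, zadd21, zadd22, -mul_eq_mul_left_iff, -mul_eq_mul_right_iff] <;>
    (try simp [hp3, hp4, hp5, hp6, hp7, hp8, zval0, zval1, zval2, zval3, zval4, zadd00, zadd01, zadd02, zadd10, zadd11, zadd12, zadd20, zadd21, zadd22, pow_succ]) <;>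
    (try ring_nf) <;> (try simp [hp3, hp4, hp5, hp6, hp7, hp8]) <;> (try norm_num) <;>
    (try linear_combination hs)

lemma Apt_01 : Apt 3 (0,1) = Matrix.of (fun i j : ZMod 3 => if i = 0 then (if j = 0 then (0:ℂ) else if j = 1 then (0:ℂ) else (1:ℂ)) else if i = 1 then (if j = 0 then (0:ℂ) else if j = 1 then (1:ℂ) else (0:ℂ)) else (if j = 0 then (1:ℂ) else if j = 1 then (0:ℂ) else (0:ℂ))) := by
  show HW 3 (0,1) * A0 3 * (HW 3 (0,1))ᴴ = _
  rw [HW_01, A0_eq]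
  ext i j
  rcases zmod3_cases i with rfl|rfl|rfl <;> rcases zmod3_cases j with rfl|rfl|rfl <;>
    simp (config := { decide := true }) [Matrix.mul_apply, Matrix.conjTranspose_apply, sum3,
      Complex.star_def, map_pow, hconj, apply_ite (starRingEnd ℂ), map_zero, _root_.map_one, zval0, zval1, zval2, zval3, zval4, zadd00, zadd01, zadd02, zadd10, zadd11, zadd12, zadd20, zadd21, zadd22, -mul_eq_mul_left_iff, -mul_eq_mul_right_iff] <;>
    (try simp [hp3, hp4, hp5, hp6, hp7, hp8, zval0, zval1, zval2, zval3, zval4, zadd00, zadd01, zadd02, zadd10, zadd11, zadd12, zadd20, zadd21, zadd22, pow_succ]) <;>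
    (try ring_nf) <;> (try simp [hp3, hp4, hp5, hp6, hp7, hp8]) <;> (try norm_num) <;>
    (try linear_combination hs)

lemma Apt_02 : Apt 3 (0,2) = Matrix.of (fun i j : ZMod 3 => if i = 0 then (if j = 0 then (0:ℂ) else if j = 1 then (1:ℂ) else (0:ℂ)) else if i = 1 then (if j = 0 then (1:ℂ) else if j = 1 then (0:ℂ) else (0:ℂ)) else (if j = 0 then (0:ℂ) else if j = 1 then (0:ℂ) else (1:ℂ))) := by
  show HW 3 (0,2) * A0 3 * (HW 3 (0,2))ᴴ = _
  rw [HW_02, A0_eq]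
  ext i j
  rcases zmod3_cases i with rfl|rfl|rfl <;> rcases zmod3_cases j with rfl|rfl|rfl <;>
    simp (config := { decide := true }) [Matrix.mul_apply, Matrix.conjTranspose_apply, sum3,
      Complex.star_def, map_pow, hconj, apply_ite (starRingEnd ℂ), map_zero, _root_.map_one, zval0, zval1, zval2, zval3, zval4, zadd00, zadd01, zadd02, zadd10, zadd11, zadd12, zadd20, zadd21, zadd22, -mul_eq_mul_left_iff, -mul_eq_mul_right_iff] <;>
    (try simp [hp3, hp4, hp5, hp6, hp7, hp8, zval0, zval1, zval2, zval3, zval4, zadd00, zadd01, zadd02, zadd10, zadd11, zadd12, zadd20, zadd21, zadd22, pow_succ]) <;>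
    (try ring_nf) <;> (try simp [hp3, hp4, hp5, hp6, hp7, hp8]) <;> (try norm_num) <;>
    (try linear_combination hs)

lemma Apt_10 : Apt 3 (1,0) = Matrix.of (fun i j : ZMod 3 => if i = 0 then (if j = 0 then (1:ℂ) else if j = 1 then (0:ℂ) else (0:ℂ)) else if i = 1 then (if j = 0 then (0:ℂ) else if j = 1 then (0:ℂ) else omegaC 3 ^ 2) else (if j = 0 then (0:ℂ) else if j = 1 then omegaC 3 else (0:ℂ))) := by
  show HW 3 (1,0) * A0 3 * (HW 3 (1,0))ᴴ = _
  rw [HW_10, A0_eq]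
  ext i j
  rcases zmod3_cases i with rfl|rfl|rfl <;> rcases zmod3_cases j with rfl|rfl|rfl <;>
    simp (config := { decide := true }) [Matrix.mul_apply, Matrix.conjTranspose_apply, sum3,
      Complex.star_def, map_pow, hconj, apply_ite (starRingEnd ℂ), map_zero, _root_.map_one, zval0, zval1, zval2, zval3, zval4, zadd00, zadd01, zadd02, zadd10, zadd11, zadd12, zadd20, zadd21, zadd22, -mul_eq_mul_left_iff, -mul_eq_mul_right_iff] <;>
    (try simp [hp3, hp4, hp5, hp6, hp7, hp8, zval0, zval1, zval2, zval3, zval4, zadd00, zadd01, zadd02, zadd10, zadd11, zadd12, zadd20, zadd21, zadd22, pow_succ]) <;>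
    (try ring_nf) <;> (try simp [hp3, hp4, hp5, hp6, hp7, hp8]) <;> (try norm_num) <;>
    (try linear_combination hs)

lemma Apt_11 : Apt 3 (1,1) = Matrix.of (fun i j : ZMod 3 => if i = 0 then (if j = 0 then (0:ℂ) else if j = 1 then (0:ℂ) else omegaC 3) else if i = 1 then (if j = 0 then (0:ℂ) else if j = 1 then (1:ℂ) else (0:ℂ)) else (if j = 0 then omegaC 3 ^ 2 else if j = 1 then (0:ℂ) else (0:ℂ))) := by
  show HW 3 (1,1) * A0 3 * (HW 3 (1,1))ᴴ = _
  rw [HW_11, A0_eq]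
  ext i j
  rcases zmod3_cases i with rfl|rfl|rfl <;> rcases zmod3_cases j with rfl|rfl|rfl <;>
    simp (config := { decide := true }) [Matrix.mul_apply, Matrix.conjTranspose_apply, sum3,
      Complex.star_def, map_pow, hconj, apply_ite (starRingEnd ℂ), map_zero, _root_.map_one, zval0, zval1, zval2, zval3, zval4, zadd00, zadd01, zadd02, zadd10, zadd11, zadd12, zadd20, zadd21, zadd22, -mul_eq_mul_left_iff, -mul_eq_mul_right_iff] <;>
    (try simp [hp3, hp4, hp5, hp6, hp7, hp8, zval0, zval1, zval2, zval3, zval4, zadd00, zadd01, zadd02, zadd10, zadd11, zadd12, zadd20, zadd21, zadd22, pow_succ]) <;>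
    (try ring_nf) <;> (try simp [hp3, hp4, hp5, hp6, hp7, hp8]) <;> (try norm_num) <;>
    (try linear_combination hs)

lemma Apt_12 : Apt 3 (1,2) = Matrix.of (fun i j : ZMod 3 => if i = 0 then (if j = 0 then (0:ℂ) else if j = 1 then omegaC 3 ^ 2 else (0:ℂ)) else if i = 1 then (if j = 0 then omegaC 3 else if j = 1 then (0:ℂ) else (0:ℂ)) else (if j = 0 then (0:ℂ) else if j = 1 then (0:ℂ) else (1:ℂ))) := by
  show HW 3 (1,2) * A0 3 * (HW 3 (1,2))ᴴ = _
  rw [HW_12, A0_eq]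
  ext i j
  rcases zmod3_cases i with rfl|rfl|rfl <;> rcases zmod3_cases j with rfl|rfl|rfl <;>
    simp (config := { decide := true }) [Matrix.mul_apply, Matrix.conjTranspose_apply, sum3,
      Complex.star_def, map_pow, hconj, apply_ite (starRingEnd ℂ), map_zero, _root_.map_one, zval0, zval1, zval2, zval3, zval4, zadd00, zadd01, zadd02, zadd10, zadd11, zadd12, zadd20, zadd21, zadd22, -mul_eq_mul_left_iff, -mul_eq_mul_right_iff] <;>
    (try simp [hp3, hp4, hp5, hp6, hp7, hp8, zval0, zval1, zval2, zval3, zval4, zadd00, zadd01, zadd02, zadd10, zadd11, zadd12, zadd20, zadd21, zadd22, pow_succ]) <;>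
    (try ring_nf) <;> (try simp [hp3, hp4, hp5, hp6, hp7, hp8]) <;> (try norm_num) <;>
    (try linear_combination hs)

lemma Apt_20 : Apt 3 (2,0) = Matrix.of (fun i j : ZMod 3 => if i = 0 then (if j = 0 then (1:ℂ) else if j = 1 then (0:ℂ) else (0:ℂ)) else if i = 1 then (if j = 0 then (0:ℂ) else if j = 1 then (0:ℂ) else omegaC 3) else (if j = 0 then (0:ℂ) else if j = 1 then omegaC 3 ^ 2 else (0:ℂ))) := by
  show HW 3 (2,0) * A0 3 * (HW 3 (2,0))ᴴ = _
  rw [HW_20, A0_eq]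
  ext i j
  rcases zmod3_cases i with rfl|rfl|rfl <;> rcases zmod3_cases j with rfl|rfl|rfl <;>
    simp (config := { decide := true }) [Matrix.mul_apply, Matrix.conjTranspose_apply, sum3,
      Complex.star_def, map_pow, hconj, apply_ite (starRingEnd ℂ), map_zero, _root_.map_one, zval0, zval1, zval2, zval3, zval4, zadd00, zadd01, zadd02, zadd10, zadd11, zadd12, zadd20, zadd21, zadd22, -mul_eq_mul_left_iff, -mul_eq_mul_right_iff] <;>
    (try simp [hp3, hp4, hp5, hp6, hp7, hp8, zval0, zval1, zval2, zval3, zval4, zadd00, zadd01, zadd02, zadd10, zadd11, zadd12, zadd20, zadd21, zadd22, pow_succ]) <;>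
    (try ring_nf) <;> (try simp [hp3, hp4, hp5, hp6, hp7, hp8]) <;> (try norm_num) <;>
    (try linear_combination hs)

lemma Apt_21 : Apt 3 (2,1) = Matrix.of (fun i j : ZMod 3 => if i = 0 then (if j = 0 then (0:ℂ) else if j = 1 then (0:ℂ) else omegaC 3 ^ 2) else if i = 1 then (if j = 0 then (0:ℂ) else if j = 1 then (1:ℂ) else (0:ℂ)) else (if j = 0 then omegaC 3 else if j = 1 then (0:ℂ) else (0:ℂ))) := by
  show HW 3 (2,1) * A0 3 * (HW 3 (2,1))ᴴ = _
  rw [HW_21, A0_eq]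
  ext i j
  rcases zmod3_cases i with rfl|rfl|rfl <;> rcases zmod3_cases j with rfl|rfl|rfl <;>
    simp (config := { decide := true }) [Matrix.mul_apply, Matrix.conjTranspose_apply, sum3,
      Complex.star_def, map_pow, hconj, apply_ite (starRingEnd ℂ), map_zero, _root_.map_one, zval0, zval1, zval2, zval3, zval4, zadd00, zadd01, zadd02, zadd10, zadd11, zadd12, zadd20, zadd21, zadd22, -mul_eq_mul_left_iff, -mul_eq_mul_right_iff] <;>
    (try simp [hp3, hp4, hp5, hp6, hp7, hp8, zval0, zval1, zval2, zval3, zval4, zadd00, zadd01, zadd02, zadd10, zadd11, zadd12, zadd20, zadd21, zadd22, pow_succ]) <;>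
    (try ring_nf) <;> (try simp [hp3, hp4, hp5, hp6, hp7, hp8]) <;> (try norm_num) <;>
    (try linear_combination hs)

lemma Apt_22 : Apt 3 (2,2) = Matrix.of (fun i j : ZMod 3 => if i = 0 then (if j = 0 then (0:ℂ) else if j = 1 then omegaC 3 else (0:ℂ)) else if i = 1 then (if j = 0 then omegaC 3 ^ 2 else if j = 1 then (0:ℂ) else (0:ℂ)) else (if j = 0 then (0:ℂ) else if j = 1 then (0:ℂ) else (1:ℂ))) := by
  show HW 3 (2,2) * A0 3 * (HW 3 (2,2))ᴴ = _
  rw [HW_22, A0_eq]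
  ext i j
  rcases zmod3_cases i with rfl|rfl|rfl <;> rcases zmod3_cases j with rfl|rfl|rfl <;>
    simp (config := { decide := true }) [Matrix.mul_apply, Matrix.conjTranspose_apply, sum3,
      Complex.star_def, map_pow, hconj, apply_ite (starRingEnd ℂ), map_zero, _root_.map_one, zval0, zval1, zval2, zval3, zval4, zadd00, zadd01, zadd02, zadd10, zadd11, zadd12, zadd20, zadd21, zadd22, -mul_eq_mul_left_iff, -mul_eq_mul_right_iff] <;>
    (try simp [hp3, hp4, hp5, hp6, hp7, hp8, zval0, zval1, zval2, zval3, zval4, zadd00, zadd01, zadd02, zadd10, zadd11, zadd12, zadd20, zadd21, zadd22, pow_succ]) <;>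
    (try ring_nf) <;> (try simp [hp3, hp4, hp5, hp6, hp7, hp8]) <;> (try norm_num) <;>
    (try linear_combination hs)

end Magic

namespace Magic

/-- the vector (1,0,-1)/√6 whose outer product is the slack operator K -/
def kvec : ZMod 3 → ℂ := fun j =>
  if j = 0 then (((Real.sqrt 6)⁻¹ : ℝ) : ℂ) else if j = 2 then ((-(Real.sqrt 6)⁻¹ : ℝ) : ℂ) else 0

def e1vec : ZMod 3 → ℂ := fun j => if j = 1 then 1 else 0

lemma sqrt6C : ((Real.sqrt 6 : ℝ) : ℂ) * ((Real.sqrt 6 : ℝ) : ℂ) = 6 := by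
  rw [← Complex.ofReal_mul, Real.mul_self_sqrt (by norm_num)]
  norm_num

lemma sqrt6_ne : ((Real.sqrt 6 : ℝ) : ℂ) ≠ 0 :=
  Complex.ofReal_ne_zero.mpr (ne_of_gt (Real.sqrt_pos.mpr (by norm_num)))

lemma i6sq : (((Real.sqrt 6 : ℝ) : ℂ))⁻¹ ^ 2 = 1/6 := by
  rw [sq, ← mul_inv, sqrt6C]
  norm_num

lemma i6sq' : (((Real.sqrt 6 : ℝ) : ℂ) ^ 2)⁻¹ = 1/6 := by
  rw [sq, sqrt6C]
  norm_num

set_option maxHeartbeats 2000000 in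
lemma key : Matrix.vecMulVec norrell (star norrell) + Matrix.vecMulVec kvec (star kvec)
    + (1/3 : ℂ) • (Apt 3 (0,0) + Apt 3 (0,2)) = (2/3 : ℂ) • (1 : Matrix (ZMod 3) (ZMod 3) ℂ) := by
  rw [Apt_00, Apt_02]
  ext i j
  rcases zmod3_cases i with rfl|rfl|rfl <;> rcases zmod3_cases j with rfl|rfl|rfl <;>
    simp (config := { decide := true }) [norrell, kvec, Matrix.vecMulVec, Matrix.add_apply,
      Matrix.smul_apply, Matrix.one_apply, Pi.star_apply, Complex.star_def,
      Complex.conj_ofReal, map_div₀, _root_.map_ofNat] <;>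
    push_cast [Complex.ofReal_inv] <;>
    (try ring_nf) <;>
    (try simp [i6sq, i6sq']) <;>
    (try norm_num [i6sq, i6sq']) <;>
    (try ring_nf) <;>
    (try norm_num [i6sq, i6sq'])

lemma trOuter (σ : Matrix (ZMod 3) (ZMod 3) ℂ) (v : ZMod 3 → ℂ) :
    (σ * Matrix.vecMulVec v (star v)).trace = star v ⬝ᵥ σ.mulVec v := by
  simp [Matrix.trace, Matrix.diag, Matrix.mul_apply, Matrix.vecMulVec, Matrix.mulVec,
    dotProduct, sum3, Pi.star_apply]
  ring

lemma trApt (σ : Matrix (ZMod 3) (ZMod 3) ℂ) (u : ZMod 3 × ZMod 3) :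
    (σ * Apt 3 u).trace = 3 * wig 3 σ u := by
  rw [Matrix.trace_mul_comm, wig]
  push_cast
  field_simp

lemma Apt_total : ∑ u : ZMod 3 × ZMod 3, Apt 3 u = (3:ℂ) • (1 : Matrix (ZMod 3) (ZMod 3) ℂ) := by
  rw [Fintype.sum_prod_type]
  simp only [sum3, Apt_00, Apt_01, Apt_02, Apt_10, Apt_11, Apt_12, Apt_20, Apt_21, Apt_22]
  ext i j
  rcases zmod3_cases i with rfl|rfl|rfl <;> rcases zmod3_cases j with rfl|rfl|rfl <;>
    simp (config := { decide := true }) [Matrix.add_apply, Matrix.smul_apply, Matrix.one_apply] <;>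
    (try norm_num) <;> (try linear_combination hs)

lemma trace_eq_sum_wig (σ : Matrix (ZMod 3) (ZMod 3) ℂ) :
    σ.trace = ∑ u : ZMod 3 × ZMod 3, wig 3 σ u := by
  have h1 : ∑ u : ZMod 3 × ZMod 3, (σ * Apt 3 u).trace = 3 * σ.trace := by
    rw [← Matrix.trace_sum, ← Matrix.mul_sum, Apt_total, Matrix.mul_smul, Matrix.mul_one,
      Matrix.trace_smul]
    simp [smul_eq_mul]
  have h2 : ∑ u : ZMod 3 × ZMod 3, (σ * Apt 3 u).trace
      = 3 * ∑ u : ZMod 3 × ZMod 3, wig 3 σ u := by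
    simp only [trApt]
    rw [Finset.mul_sum]
  have h3 : (3:ℂ) ≠ 0 := by norm_num
  exact mul_left_cancel₀ h3 (h1.symm.trans h2)

lemma decomp (σ : Matrix (ZMod 3) (ZMod 3) ℂ) :
    star norrell ⬝ᵥ σ.mulVec norrell
      = (2/3:ℂ) * ∑ u : ZMod 3 × ZMod 3, wig 3 σ u
        - (wig 3 σ (0,0) + wig 3 σ (0,2)) - star kvec ⬝ᵥ σ.mulVec kvec := by
  rw [← trOuter, ← trOuter]
  have hP : Matrix.vecMulVec norrell (star norrell)
      = (2/3 : ℂ) • (1 : Matrix (ZMod 3) (ZMod 3) ℂ) - Matrix.vecMulVec kvec (star kvec)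
        - (1/3:ℂ) • (Apt 3 (0,0) + Apt 3 (0,2)) := by
    rw [sub_sub, eq_sub_iff_add_eq, ← key]
    abel
  rw [hP, Matrix.mul_sub, Matrix.mul_sub, Matrix.trace_sub, Matrix.trace_sub,
    Matrix.mul_smul, Matrix.mul_one, Matrix.trace_smul, Matrix.mul_smul, Matrix.mul_add,
    Matrix.trace_smul, Matrix.trace_add, trApt, trApt, trace_eq_sum_wig]
  simp [smul_eq_mul]
  ring

end Magic

namespace Magic

lemma ub (σ : Matrix (ZMod 3) (ZMod 3) ℂ) (hσ : σ.PosSemidef) (hw : wnorm1 3 σ ≤ 1) :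
    (star norrell ⬝ᵥ σ.mulVec norrell).re ≤ 2/3 := by
  have hk : (0:ℂ) ≤ star kvec ⬝ᵥ σ.mulVec kvec := hσ.dotProduct_mulVec_nonneg kvec
  have hkre : 0 ≤ (star kvec ⬝ᵥ σ.mulVec kvec).re := by
    have h := (Complex.le_def.mp hk).1
    simpa using h
  rw [decomp σ]
  have hre : ((2/3:ℂ) * ∑ u : ZMod 3 × ZMod 3, wig 3 σ u
      - (wig 3 σ (0,0) + wig 3 σ (0,2)) - star kvec ⬝ᵥ σ.mulVec kvec).re
      = (2/3) * ∑ u : ZMod 3 × ZMod 3, (wig 3 σ u).re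
        - ((wig 3 σ (0,0)).re + (wig 3 σ (0,2)).re)
        - (star kvec ⬝ᵥ σ.mulVec kvec).re := by
    rw [show ((2:ℂ)/3) = (((2:ℝ)/3 : ℝ) : ℂ) by norm_num]
    simp [Complex.sub_re, Complex.add_re, Complex.re_sum]
  rw [hre]
  have h1 : ∀ u : ZMod 3 × ZMod 3, (wig 3 σ u).re ≤ ‖wig 3 σ u‖ :=
    fun u => Complex.re_le_norm _
  have h2 : ∀ u : ZMod 3 × ZMod 3, -(‖wig 3 σ u‖) ≤ (wig 3 σ u).re :=
    fun u => (abs_le.mp (Complex.abs_re_le_norm _)).1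
  have hnn : ∀ u : ZMod 3 × ZMod 3, 0 ≤ ‖wig 3 σ u‖ :=
    fun u => norm_nonneg _
  have hsum : (2/3) * ∑ u : ZMod 3 × ZMod 3, (wig 3 σ u).re
      - ((wig 3 σ (0,0)).re + (wig 3 σ (0,2)).re) ≤ (2/3) * wnorm1 3 σ := by
    rw [wnorm1, Fintype.sum_prod_type, Fintype.sum_prod_type]
    simp only [sum3]
    linarith [h1 (0,0), h1 (0,1), h1 (0,2), h1 (1,0), h1 (1,1), h1 (1,2),
      h1 (2,0), h1 (2,1), h1 (2,2), h2 (0,0), h2 (0,2), hnn (0,0), hnn (0,2)]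
  have : (2/3) * wnorm1 3 σ ≤ 2/3 := by linarith
  linarith

def sig1 : Matrix (ZMod 3) (ZMod 3) ℂ := Matrix.vecMulVec e1vec (star e1vec)

lemma sig1_psd : sig1.PosSemidef := by
  have h : sig1 = Matrix.replicateCol (Fin 1) e1vec * (Matrix.replicateCol (Fin 1) e1vec)ᴴ := by
    rw [Matrix.conjTranspose_replicateCol]
    exact Matrix.vecMulVec_eq (Fin 1) _ _
  rw [h]
  exact Matrix.posSemidef_self_mul_conjTranspose _

lemma sig1_wnorm : wnorm1 3 sig1 = 1 := by
  have e00 : wig 3 sig1 (0,0) = 0 := by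
    simp only [wig]
    rw [Apt_00]
    simp (config := { decide := true }) [sig1, e1vec, Matrix.trace, Matrix.diag, Matrix.mul_apply,
      Matrix.vecMulVec, sum3, Pi.star_apply, Complex.star_def]
    try norm_num
  have e01 : wig 3 sig1 (0,1) = 1/3 := by
    simp only [wig]
    rw [Apt_01]
    simp (config := { decide := true }) [sig1, e1vec, Matrix.trace, Matrix.diag, Matrix.mul_apply,
      Matrix.vecMulVec, sum3, Pi.star_apply, Complex.star_def]
    try norm_num
  have e02 : wig 3 sig1 (0,2) = 0 := by
    simp only [wig]
    rw [Apt_02]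
    simp (config := { decide := true }) [sig1, e1vec, Matrix.trace, Matrix.diag, Matrix.mul_apply,
      Matrix.vecMulVec, sum3, Pi.star_apply, Complex.star_def]
    try norm_num
  have e10 : wig 3 sig1 (1,0) = 0 := by
    simp only [wig]
    rw [Apt_10]
    simp (config := { decide := true }) [sig1, e1vec, Matrix.trace, Matrix.diag, Matrix.mul_apply,
      Matrix.vecMulVec, sum3, Pi.star_apply, Complex.star_def]
    try norm_num
  have e11 : wig 3 sig1 (1,1) = 1/3 := by
    simp only [wig]
    rw [Apt_11]
    simp (config := { decide := true }) [sig1, e1vec, Matrix.trace, Matrix.diag, Matrix.mul_apply,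
      Matrix.vecMulVec, sum3, Pi.star_apply, Complex.star_def]
    try norm_num
  have e12 : wig 3 sig1 (1,2) = 0 := by
    simp only [wig]
    rw [Apt_12]
    simp (config := { decide := true }) [sig1, e1vec, Matrix.trace, Matrix.diag, Matrix.mul_apply,
      Matrix.vecMulVec, sum3, Pi.star_apply, Complex.star_def]
    try norm_num
  have e20 : wig 3 sig1 (2,0) = 0 := by
    simp only [wig]
    rw [Apt_20]
    simp (config := { decide := true }) [sig1, e1vec, Matrix.trace, Matrix.diag, Matrix.mul_apply,
      Matrix.vecMulVec, sum3, Pi.star_apply, Complex.star_def]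
    try norm_num
  have e21 : wig 3 sig1 (2,1) = 1/3 := by
    simp only [wig]
    rw [Apt_21]
    simp (config := { decide := true }) [sig1, e1vec, Matrix.trace, Matrix.diag, Matrix.mul_apply,
      Matrix.vecMulVec, sum3, Pi.star_apply, Complex.star_def]
    try norm_num
  have e22 : wig 3 sig1 (2,2) = 0 := by
    simp only [wig]
    rw [Apt_22]
    simp (config := { decide := true }) [sig1, e1vec, Matrix.trace, Matrix.diag, Matrix.mul_apply,
      Matrix.vecMulVec, sum3, Pi.star_apply, Complex.star_def]
    try norm_num
  rw [wnorm1, Fintype.sum_prod_type]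
  simp only [sum3, e00, e01, e02, e10, e11, e12, e20, e21, e22]
  norm_num [map_div₀, Complex.norm_ofNat]

lemma sig1_val : (star norrell ⬝ᵥ sig1.mulVec norrell).re = 2/3 := by
  have h : star norrell ⬝ᵥ sig1.mulVec norrell = (((2:ℝ)/3 : ℝ) : ℂ) := by
    simp (config := { decide := true }) [sig1, e1vec, norrell, Matrix.mulVec, Matrix.vecMulVec,
      dotProduct, sum3, Pi.star_apply, Complex.star_def, Complex.conj_ofReal, map_div₀,
      _root_.map_ofNat]
    push_cast
    field_simp
    linear_combination (-1 : ℂ) * sqrt6C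
  rw [h, Complex.ofReal_re]

theorem norrell_minThauma_sdp' :
    sSup {x : ℝ | ∃ σ : Matrix (ZMod 3) (ZMod 3) ℂ,
      σ.PosSemidef ∧ wnorm1 3 σ ≤ 1 ∧ x = (star norrell ⬝ᵥ σ.mulVec norrell).re} = 2 / 3 := by
  have hmem : (2/3 : ℝ) ∈ {x : ℝ | ∃ σ : Matrix (ZMod 3) (ZMod 3) ℂ,
      σ.PosSemidef ∧ wnorm1 3 σ ≤ 1 ∧ x = (star norrell ⬝ᵥ σ.mulVec norrell).re} :=
    ⟨sig1, sig1_psd, le_of_eq sig1_wnorm, sig1_val.symm⟩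
  have hub : ∀ x ∈ {x : ℝ | ∃ σ : Matrix (ZMod 3) (ZMod 3) ℂ,
      σ.PosSemidef ∧ wnorm1 3 σ ≤ 1 ∧ x = (star norrell ⬝ᵥ σ.mulVec norrell).re}, x ≤ 2/3 := by
    rintro x ⟨σ, hpsd, hw, rfl⟩
    exact ub σ hpsd hw
  exact le_antisymm (csSup_le ⟨2/3, hmem⟩ hub) (le_csSup ⟨2/3, hub⟩ hmem)

end Magic
namespace Magic

/-- θ_min of the Norrell state:
sup{ ⟨N|σ|N⟩ : σ ⪰ 0, ‖σ‖_{W,1} ≤ 1 } = 2/3. -/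
theorem norrell_minThauma_sdp :
    sSup {x : ℝ | ∃ σ : Matrix (ZMod 3) (ZMod 3) ℂ,
      σ.PosSemidef ∧ wnorm1 3 σ ≤ 1 ∧ x = (star norrell ⬝ᵥ σ.mulVec norrell).re} = 2 / 3 := by
  exact norrell_minThauma_sdp'

end Magic
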